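/- Let R₂ > 0 and C > 0, and let v₀, v₁ : (0,∞) → ℝ be continuously differentiable. Suppose there exists ρ₀ > R₂ such that v₀(r) = 0 and v₁(r) = 0 for all r ≥ ρ₀. Assume that for every R ≥ R₂ the integral ∫_{R}^{∞} [ (v₀'(r)/r)² + (v₁'(r))² ] dr is finite and satisfies ( ∫_{R}^{∞} [ (v₀'(r)/r)² + (v₁'(r))² ] dr )^{1/2} ≤ C·R^{−1}·( 3R^{−3}·v₀(R)² + R^{−1}·v₁(R)² )^{3/2}. Then v₀(r) = 0 and v₁(r) = 0 for every r > R₂. -/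

import Mathlib

open Set MeasureTheory

lemma deriv_int_bound (w g : ℝ → ℝ) (R b t c J : ℝ) (hR : 0 < R) (hRb : R ≤ b)
    (ht : 0 < t) (hc : 0 ≤ c)
    (hw : ∀ x ∈ Icc R b, DifferentiableAt ℝ w x)
    (hw' : ContinuousOn (deriv w) (Icc R b))
    (hg : ContinuousOn g (Icc R b))
    (hwg : ∀ x ∈ Icc R b, |deriv w x| ≤ c * |g x|)
    (hwb : w b = 0)
    (hJ : (∫ x in R..b, (g x) ^ 2) ≤ J) :
    |w R| ≤ c * (b * t + J / t) / 2 := by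
  have huIcc : uIcc R b = Icc R b := uIcc_of_le hRb
  have hderiv_int : IntervalIntegrable (deriv w) volume R b :=
    (huIcc ▸ hw' : ContinuousOn (deriv w) (uIcc R b)).intervalIntegrable
  have hftc : ∫ y in R..b, deriv w y = w b - w R :=
    intervalIntegral.integral_deriv_eq_sub (fun x hx => hw x (huIcc ▸ hx)) hderiv_int
  have hgsq : ContinuousOn (fun x => c * (t / 2) + c / (2 * t) * (g x) ^ 2) (Icc R b) := by
    exact continuousOn_const.add (continuousOn_const.mul (hg.pow 2))
  have hgsq_int : IntervalIntegrable (fun x => c * (t / 2) + c / (2 * t) * (g x) ^ 2)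
      volume R b := (huIcc ▸ hgsq : ContinuousOn _ (uIcc R b)).intervalIntegrable
  have hpt : ∀ x ∈ Icc R b, |deriv w x| ≤ c * (t / 2) + c / (2 * t) * (g x) ^ 2 := by
    intro x hx
    have h1 := hwg x hx
    have h2 : |g x| ≤ t / 2 + (g x) ^ 2 / (2 * t) := by
      have heq : t / 2 + (g x) ^ 2 / (2 * t) - |g x| = (t - |g x|) ^ 2 / (2 * t) := by
        rw [sub_sq, sq_abs]
        field_simp
        ring
      nlinarith [div_nonneg (sq_nonneg (t - |g x|)) (by linarith : (0:ℝ) ≤ 2 * t)]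
    calc |deriv w x| ≤ c * |g x| := h1
      _ ≤ c * (t / 2 + (g x) ^ 2 / (2 * t)) := by
          exact mul_le_mul_of_nonneg_left h2 hc
      _ = c * (t / 2) + c / (2 * t) * (g x) ^ 2 := by field_simp
  have hgsq_int2 : IntervalIntegrable (fun x => (g x) ^ 2) volume R b :=
    (huIcc ▸ (hg.pow 2) : ContinuousOn _ (uIcc R b)).intervalIntegrable
  calc |w R| = |∫ y in R..b, deriv w y| := by rw [hftc, hwb, zero_sub, abs_neg]
    _ ≤ ∫ y in R..b, |deriv w y| := intervalIntegral.abs_integral_le_integral_abs hRb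
    _ ≤ ∫ y in R..b, (c * (t / 2) + c / (2 * t) * (g y) ^ 2) := by
        exact intervalIntegral.integral_mono_on hRb hderiv_int.abs hgsq_int hpt
    _ = c * (t / 2) * (b - R) + c / (2 * t) * ∫ y in R..b, (g y) ^ 2 := by
        rw [intervalIntegral.integral_add intervalIntegrable_const (hgsq_int2.const_mul _),
          intervalIntegral.integral_const, intervalIntegral.integral_const_mul]
        simp [smul_eq_mul]; ring
    _ ≤ c * (t / 2) * b + c / (2 * t) * J := by
        have h1 : c * (t / 2) * (b - R) ≤ c * (t / 2) * b := by
          apply mul_le_mul_of_nonneg_left (by linarith) (by positivity)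
        have h2 : c / (2 * t) * (∫ y in R..b, (g y) ^ 2) ≤ c / (2 * t) * J :=
          mul_le_mul_of_nonneg_left hJ (by positivity)
        linarith
    _ = c * (b * t + J / t) / 2 := by field_simp

set_option maxHeartbeats 1000000 in
theorem rigidity_compact_support_vanishing (R₂ C : ℝ) (hR₂ : 0 < R₂) (hC : 0 < C)
    (v₀ v₁ : ℝ → ℝ)
    (hv₀ : ContDiffOn ℝ 1 v₀ (Ioi 0)) (hv₁ : ContDiffOn ℝ 1 v₁ (Ioi 0))
    (ρ₀ : ℝ) (hρ₀ : R₂ < ρ₀)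
    (hsupp : ∀ r ≥ ρ₀, v₀ r = 0 ∧ v₁ r = 0)
    (hint : ∀ R ≥ R₂,
      IntegrableOn (fun r => (deriv v₀ r / r) ^ 2 + (deriv v₁ r) ^ 2) (Ici R) ∧
      Real.sqrt (∫ r in Ici R, ((deriv v₀ r / r) ^ 2 + (deriv v₁ r) ^ 2)) ≤
        C * R⁻¹ * (3 * (v₀ R) ^ 2 / R ^ 3 + (v₁ R) ^ 2 / R) ^ ((3:ℝ)/2)) :
    ∀ r > R₂, v₀ r = 0 ∧ v₁ r = 0 := by
  have hρ₀pos : 0 < ρ₀ := hR₂.trans hρ₀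
  set f : ℝ → ℝ := fun x => (deriv v₀ x / x) ^ 2 + (deriv v₁ x) ^ 2 with hfdef
  set I : ℝ → ℝ := fun R => ∫ x in Ici R, f x with hIdef
  have hfnn : ∀ x, 0 ≤ f x := fun x => add_nonneg (sq_nonneg _) (sq_nonneg _)
  have hInn : ∀ R, 0 ≤ I R := fun R =>
    setIntegral_nonneg measurableSet_Ici fun x _ => hfnn x
  have hIf : IntegrableOn f (Ici R₂) := (hint R₂ le_rfl).1
  -- I ρ₀ = 0
  have hf0 : ∀ x ∈ Ioi ρ₀, f x = 0 := by
    intro x hx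
    have h0 : deriv v₀ x = 0 := by
      have hev : v₀ =ᶠ[nhds x] fun _ => (0 : ℝ) :=
        Filter.eventually_of_mem (Ioi_mem_nhds hx) fun y hy => (hsupp y (le_of_lt hy)).1
      rw [hev.deriv_eq, deriv_const]
    have h1 : deriv v₁ x = 0 := by
      have hev : v₁ =ᶠ[nhds x] fun _ => (0 : ℝ) :=
        Filter.eventually_of_mem (Ioi_mem_nhds hx) fun y hy => (hsupp y (le_of_lt hy)).2
      rw [hev.deriv_eq, deriv_const]
    simp [hfdef, h0, h1]
  have hIρ : I ρ₀ = 0 := by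
    rw [hIdef]
    simp only
    rw [integral_Ici_eq_integral_Ioi, setIntegral_congr_fun measurableSet_Ioi hf0,
      integral_zero]
  -- continuity of I on Icc R₂ ρ₀
  have hkey : ∀ R ∈ Icc R₂ ρ₀, I R = I R₂ - ∫ x in Ioc R₂ R, f x := by
    intro R hR
    have hunion : Ico R₂ R ∪ Ici R = Ici R₂ := Ico_union_Ici_eq_Ici hR.1
    have hdisj : Disjoint (Ico R₂ R) (Ici R) :=
      disjoint_left.mpr fun x hx hx' => absurd hx.2 (not_lt.mpr hx')
    have hsplit := setIntegral_union hdisj measurableSet_Ici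
      (hIf.mono_set (by rw [← hunion]; exact subset_union_left))
      (hIf.mono_set (Ici_subset_Ici.mpr hR.1)) (f := f) (μ := volume)
    rw [hunion] at hsplit
    have hIco : ∫ x in Ico R₂ R, f x = ∫ x in Ioc R₂ R, f x :=
      setIntegral_congr_set Ico_ae_eq_Ioc
    rw [hIdef]; simp only
    rw [← hIco]; linarith [hsplit]
  have hIcont : ContinuousOn I (Icc R₂ ρ₀) := by
    have hprim := intervalIntegral.continuousOn_primitive (f := f) (μ := volume)
      (a := R₂) (b := ρ₀) (hIf.mono_set Icc_subset_Ici_self)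
    exact (continuousOn_const.sub hprim).congr fun R hR => hkey R hR
  -- now fix r
  intro r hr
  rcases le_or_gt ρ₀ r with hcase | hcase
  · exact hsupp r hcase
  have hr0 : 0 < r := hR₂.trans hr
  -- the FTC bound
  have hbound : ∀ R ∈ Icc r ρ₀, ∀ t : ℝ, 0 < t →
      |v₀ R| ≤ ρ₀ * (ρ₀ * t + I R / t) / 2 ∧ |v₁ R| ≤ 1 * (ρ₀ * t + I R / t) / 2 := by
    intro R hR t ht
    have hR0 : 0 < R := lt_of_lt_of_le hr0 hR.1
    have hRR₂ : R₂ ≤ R := le_trans hr.le hR.1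
    have hsub : Icc R ρ₀ ⊆ Ioi 0 := fun x hx => lt_of_lt_of_le hR0 hx.1
    have hfI : IntegrableOn f (Ici R) := (hint R hRR₂).1
    have hdiff₀ : ∀ x ∈ Icc R ρ₀, DifferentiableAt ℝ v₀ x := fun x hx =>
      (hv₀.contDiffAt (Ioi_mem_nhds (hsub hx))).differentiableAt one_ne_zero
    have hdiff₁ : ∀ x ∈ Icc R ρ₀, DifferentiableAt ℝ v₁ x := fun x hx =>
      (hv₁.contDiffAt (Ioi_mem_nhds (hsub hx))).differentiableAt one_ne_zero
    have hdc₀ : ContinuousOn (deriv v₀) (Icc R ρ₀) :=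
      (hv₀.continuousOn_deriv_of_isOpen isOpen_Ioi le_rfl).mono hsub
    have hdc₁ : ContinuousOn (deriv v₁) (Icc R ρ₀) :=
      (hv₁.continuousOn_deriv_of_isOpen isOpen_Ioi le_rfl).mono hsub
    have hg₀ : ContinuousOn (fun x => deriv v₀ x / x) (Icc R ρ₀) :=
      hdc₀.div continuousOn_id fun x hx => ne_of_gt (hsub hx)
    have hJ₀ : (∫ x in R..ρ₀, (deriv v₀ x / x) ^ 2) ≤ I R := by
      rw [intervalIntegral.integral_of_le hR.2]
      have hint1 : IntegrableOn (fun x => (deriv v₀ x / x) ^ 2) (Ioc R ρ₀) :=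
        ((hg₀.pow 2).integrableOn_compact isCompact_Icc).mono_set Ioc_subset_Icc_self
      calc ∫ x in Ioc R ρ₀, (deriv v₀ x / x) ^ 2
          ≤ ∫ x in Ioc R ρ₀, f x :=
            setIntegral_mono_on hint1 (hfI.mono_set (Ioc_subset_Icc_self.trans Icc_subset_Ici_self))
              measurableSet_Ioc fun x _ => le_add_of_nonneg_right (sq_nonneg _)
        _ ≤ I R := setIntegral_mono_set hfI (ae_of_all _ fun x => hfnn x)
            (HasSubset.Subset.eventuallyLE (Ioc_subset_Icc_self.trans Icc_subset_Ici_self))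
    have hJ₁ : (∫ x in R..ρ₀, (deriv v₁ x) ^ 2) ≤ I R := by
      rw [intervalIntegral.integral_of_le hR.2]
      have hint1 : IntegrableOn (fun x => (deriv v₁ x) ^ 2) (Ioc R ρ₀) :=
        ((hdc₁.pow 2).integrableOn_compact isCompact_Icc).mono_set Ioc_subset_Icc_self
      calc ∫ x in Ioc R ρ₀, (deriv v₁ x) ^ 2
          ≤ ∫ x in Ioc R ρ₀, f x :=
            setIntegral_mono_on hint1 (hfI.mono_set (Ioc_subset_Icc_self.trans Icc_subset_Ici_self))
              measurableSet_Ioc fun x _ => le_add_of_nonneg_left (sq_nonneg _)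
        _ ≤ I R := setIntegral_mono_set hfI (ae_of_all _ fun x => hfnn x)
            (HasSubset.Subset.eventuallyLE (Ioc_subset_Icc_self.trans Icc_subset_Ici_self))
    constructor
    · refine deriv_int_bound v₀ (fun x => deriv v₀ x / x) R ρ₀ t ρ₀ (I R) hR0 hR.2 ht
        hρ₀pos.le hdiff₀ hdc₀ hg₀ ?_ (hsupp ρ₀ le_rfl).1 hJ₀
      intro x hx
      have hx0 : 0 < x := hsub hx
      calc |deriv v₀ x| = |deriv v₀ x / x| * |x| := by
            rw [← abs_mul, div_mul_cancel₀ _ hx0.ne']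
        _ = |deriv v₀ x / x| * x := by rw [abs_of_pos hx0]
        _ ≤ |deriv v₀ x / x| * ρ₀ := mul_le_mul_of_nonneg_left hx.2 (abs_nonneg _)
        _ = ρ₀ * |deriv v₀ x / x| := mul_comm _ _
    · refine deriv_int_bound v₁ (deriv v₁) R ρ₀ t 1 (I R) hR0 hR.2 ht
        zero_le_one hdiff₁ hdc₁ hdc₁ ?_ (hsupp ρ₀ le_rfl).2 hJ₁
      intro x _
      rw [one_mul]
  -- constants
  set B₀ : ℝ := (ρ₀ * (ρ₀ + 1) / 2) ^ 2 with hB₀def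
  set B₁ : ℝ := ((ρ₀ + 1) / 2) ^ 2 with hB₁def
  set K : ℝ := 3 * B₀ / r ^ 3 + B₁ / r with hKdef
  have hK : 0 < K := by rw [hKdef, hB₀def, hB₁def]; positivity
  set A : ℝ := C * r⁻¹ * K ^ ((3:ℝ)/2) with hAdef
  have hA : 0 < A := by
    rw [hAdef]
    have := Real.rpow_pos_of_pos hK ((3:ℝ)/2)
    positivity
  set ε : ℝ := A⁻¹ with hεdef
  have hε : 0 < ε := inv_pos.mpr hA
  -- dichotomy
  have hdich : ∀ R ∈ Icc r ρ₀, I R = 0 ∨ ε ≤ I R := by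
    intro R hR
    rcases eq_or_lt_of_le (hInn R) with h0 | hpos
    · exact Or.inl h0.symm
    right
    have hRR₂ : R₂ ≤ R := le_trans hr.le hR.1
    have hR0 : 0 < R := lt_of_lt_of_le hr0 hR.1
    obtain ⟨-, hineq⟩ := hint R hRR₂
    set t : ℝ := Real.sqrt (I R) with htdef
    have ht : 0 < t := Real.sqrt_pos.mpr hpos
    have htt : t ^ 2 = I R := Real.sq_sqrt (hInn R)
    have hIt : I R / t = t := by
      rw [eq_comm, eq_div_iff ht.ne']; nlinarith [htt]
    obtain ⟨hb₀, hb₁⟩ := hbound R hR t ht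
    rw [hIt] at hb₀ hb₁
    have hv0sq : (v₀ R) ^ 2 ≤ B₀ * I R := by
      have h1 : |v₀ R| ^ 2 ≤ (ρ₀ * (ρ₀ * t + t) / 2) ^ 2 :=
        pow_le_pow_left₀ (abs_nonneg _) hb₀ 2
      rw [sq_abs] at h1
      calc (v₀ R) ^ 2 ≤ (ρ₀ * (ρ₀ * t + t) / 2) ^ 2 := h1
        _ = B₀ * t ^ 2 := by rw [hB₀def]; ring
        _ = B₀ * I R := by rw [htt]
    have hv1sq : (v₁ R) ^ 2 ≤ B₁ * I R := by
      have h1 : |v₁ R| ^ 2 ≤ (1 * (ρ₀ * t + t) / 2) ^ 2 :=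
        pow_le_pow_left₀ (abs_nonneg _) hb₁ 2
      rw [sq_abs] at h1
      calc (v₁ R) ^ 2 ≤ (1 * (ρ₀ * t + t) / 2) ^ 2 := h1
        _ = B₁ * t ^ 2 := by rw [hB₁def]; ring
        _ = B₁ * I R := by rw [htt]
    have hXle : 3 * (v₀ R) ^ 2 / R ^ 3 + (v₁ R) ^ 2 / R ≤ K * I R := by
      have h1 : 3 * (v₀ R) ^ 2 / R ^ 3 ≤ 3 * (B₀ * I R) / r ^ 3 :=
        div_le_div₀ (by positivity) (by linarith) (by positivity)
          (by gcongr; exact hR.1)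
      have h2 : (v₁ R) ^ 2 / R ≤ B₁ * I R / r :=
        div_le_div₀ (by positivity) hv1sq hr0 hR.1
      calc 3 * (v₀ R) ^ 2 / R ^ 3 + (v₁ R) ^ 2 / R
          ≤ 3 * (B₀ * I R) / r ^ 3 + B₁ * I R / r := by linarith
        _ = K * I R := by rw [hKdef]; ring
    have hXnn : 0 ≤ 3 * (v₀ R) ^ 2 / R ^ 3 + (v₁ R) ^ 2 / R := by positivity
    have hchain : Real.sqrt (I R) ≤ A * I R ^ ((3:ℝ)/2) := by
      calc Real.sqrt (I R)
          ≤ C * R⁻¹ * (3 * (v₀ R) ^ 2 / R ^ 3 + (v₁ R) ^ 2 / R) ^ ((3:ℝ)/2) := hineq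
        _ ≤ C * r⁻¹ * (K * I R) ^ ((3:ℝ)/2) := by
            apply mul_le_mul
            · exact mul_le_mul_of_nonneg_left
                (inv_anti₀ hr0 hR.1) hC.le
            · exact Real.rpow_le_rpow hXnn hXle (by norm_num)
            · positivity
            · positivity
        _ = A * I R ^ ((3:ℝ)/2) := by
            rw [hAdef, Real.mul_rpow hK.le (hInn R)]; ring
    have hI32 : I R ^ ((3:ℝ)/2) = t * I R := by
      rw [htdef, Real.sqrt_eq_rpow, show ((3:ℝ)/2) = 1 + 1/2 from by norm_num,
        Real.rpow_one_add' (hInn R) (by norm_num)]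
      ring
    rw [hI32, htdef] at hchain
    -- t ≤ A * (t * I R), t > 0 ⇒ 1 ≤ A * I R
    have h1le : 1 ≤ A * I R := by
      have h2 : 1 * t ≤ (A * I R) * t := by
        calc 1 * t = t := one_mul t
          _ ≤ A * (t * I R) := hchain
          _ = (A * I R) * t := by ring
      exact le_of_mul_le_mul_right h2 ht
    rw [hεdef, inv_eq_one_div, div_le_iff₀ hA]
    linarith [h1le, mul_comm A (I R)]
  -- IVT: I r = 0
  have hIr : I r = 0 := by
    by_contra hne
    have hεle : ε ≤ I r := (hdich r ⟨le_rfl, hcase.le⟩).resolve_left hne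
    have hcont' : ContinuousOn I (Icc r ρ₀) :=
      hIcont.mono (Icc_subset_Icc_left hr.le)
    have hivt := intermediate_value_Icc' hcase.le hcont'
    have hmem : ε / 2 ∈ Icc (I ρ₀) (I r) := by
      rw [hIρ]; exact ⟨by linarith, by linarith⟩
    obtain ⟨R, hRmem, hIR⟩ := hivt hmem
    rcases hdich R hRmem with h0 | hge
    · rw [h0] at hIR; linarith
    · rw [hIR] at hge; linarith
  -- conclude
  have hsmall : ∀ c w : ℝ, 0 ≤ c → (∀ t : ℝ, 0 < t → |w| ≤ c * t) → w = 0 := by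
    intro c w hc hw
    have habs : |w| ≤ 0 := by
      apply le_of_forall_pos_le_add
      intro δ hδ
      have ht : 0 < δ / (c + 1) := by positivity
      have h1 := hw _ ht
      have h2 : c * (δ / (c + 1)) ≤ (c + 1) * (δ / (c + 1)) := by
        apply mul_le_mul_of_nonneg_right (by linarith) ht.le
      have h3 : (c + 1) * (δ / (c + 1)) = δ := by field_simp
      linarith
    exact abs_eq_zero.mp (le_antisymm habs (abs_nonneg _))
  constructor
  · apply hsmall (ρ₀ ^ 2 / 2) _ (by positivity)
    intro t ht
    have h1 := (hbound r ⟨le_rfl, hcase.le⟩ t ht).1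
    rw [hIr] at h1
    calc |v₀ r| ≤ ρ₀ * (ρ₀ * t + 0 / t) / 2 := h1
      _ = ρ₀ ^ 2 / 2 * t := by rw [zero_div, add_zero]; ring
  · apply hsmall (ρ₀ / 2) _ (by positivity)
    intro t ht
    have h1 := (hbound r ⟨le_rfl, hcase.le⟩ t ht).2
    rw [hIr] at h1
    calc |v₁ r| ≤ 1 * (ρ₀ * t + 0 / t) / 2 := h1
      _ = ρ₀ / 2 * t := by rw [zero_div, add_zero]; ring
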